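/- Let d ≥ 1, let 𝒰 be a unitary ensemble on ℂ^d, and let ℰ : M_d → M_d be a quantum channel such that M_{𝒰,ℰ} is invertible. Assume additionally that for every basis index b ∈ {1,…,d} there exists a density matrix σ on ℂ^d with ⟨b|ℰ(σ)|b⟩ ≠ 0. Then the shadow seminorm is point-separating on Hermitian matrices: if T is Hermitian and ‖T‖_{shadow,𝒰,ℰ} = 0, then T = 0. -/

import Mathlib

open scoped ComplexOrder Kronecker
open Matrix MeasureTheory

noncomputable section

namespace NoisyShadows

/-- The shadow channel `M_{𝒰,ℰ}` of the unitary ensemble `U` (a nonempty finite family,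
averaged uniformly) and the map `E`:
`M(A) = E_{U∼𝒰} Σ_b ⟨b|E(U A U†)|b⟩ · U†|b⟩⟨b|U`. -/
def shadowChannel {κ ι : Type*} [Fintype κ] [Fintype ι] [DecidableEq ι]
    (U : κ → Matrix ι ι ℂ) (E : Matrix ι ι ℂ → Matrix ι ι ℂ)
    (A : Matrix ι ι ℂ) : Matrix ι ι ℂ :=
  (Fintype.card κ : ℂ)⁻¹ • ∑ k : κ, ∑ b : ι,
    (E (U k * A * (U k)ᴴ)) b b • ((U k)ᴴ * Matrix.single b b 1 * U k)

/-- A positive map sends positive semidefinite matrices to positive semidefinite matrices. -/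
def IsPositiveMap {ι : Type*} [Fintype ι] (Φ : Matrix ι ι ℂ → Matrix ι ι ℂ) : Prop :=
  ∀ A : Matrix ι ι ℂ, A.PosSemidef → (Φ A).PosSemidef

/-- The blockwise map `id_{M_k} ⊗ Φ`. -/
def tensorIdMap (k : ℕ) {ι : Type*} (Φ : Matrix ι ι ℂ → Matrix ι ι ℂ) :
    Matrix (Fin k × ι) (Fin k × ι) ℂ → Matrix (Fin k × ι) (Fin k × ι) ℂ :=
  fun M => Matrix.of fun p q => Φ (Matrix.of fun a b => M (p.1, a) (q.1, b)) p.2 q.2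

/-- Complete positivity. -/
def IsCompletelyPositive {ι : Type*} [Fintype ι] (Φ : Matrix ι ι ℂ → Matrix ι ι ℂ) : Prop :=
  ∀ k : ℕ, 1 ≤ k → IsPositiveMap (tensorIdMap k Φ)

/-- Trace preservation. -/
def IsTracePreserving {ι : Type*} [Fintype ι] (Φ : Matrix ι ι ℂ → Matrix ι ι ℂ) : Prop :=
  ∀ A : Matrix ι ι ℂ, (Φ A).trace = A.trace

/-- A quantum channel is a completely positive trace-preserving linear map. -/
def IsQuantumChannel {ι : Type*} [Fintype ι] (Φ : Matrix ι ι ℂ → Matrix ι ι ℂ) : Prop :=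
  IsCompletelyPositive Φ ∧ IsTracePreserving Φ

/-- A density matrix: positive semidefinite with trace one. -/
def IsDensityMatrix {ι : Type*} [Fintype ι] (σ : Matrix ι ι ℂ) : Prop :=
  σ.PosSemidef ∧ σ.trace = 1

/-- All members of the family are unitary matrices. -/
def IsUnitaryEnsemble {κ ι : Type*} [Fintype ι] [DecidableEq ι]
    (U : κ → Matrix ι ι ℂ) : Prop :=
  ∀ k, U k ∈ Matrix.unitaryGroup ι ℂ

/-- `Ψ` is the adjoint of `Φ` with respect to the Hilbert–Schmidt inner product
`⟨A,B⟩ = tr(A† B)`. -/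
def IsHSAdjoint {ι : Type*} [Fintype ι] (Φ Ψ : Matrix ι ι ℂ → Matrix ι ι ℂ) : Prop :=
  ∀ A B : Matrix ι ι ℂ, (Aᴴ * Φ B).trace = ((Ψ A)ᴴ * B).trace

/-- Square of the shadow seminorm `‖O‖²_{shadow,𝒰,ℰ}`, expressed with a given adjoint
`MinvAdj` of the inverse shadow channel: the supremum over density matrices `σ` of
`E_{U∼𝒰} Σ_b ⟨b|E(UσU†)|b⟩ ⟨b|U M^{-1,†}(O) U†|b⟩²`. -/
def shadowNormSq {κ ι : Type*} [Fintype κ] [Fintype ι] [DecidableEq ι]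
    (U : κ → Matrix ι ι ℂ) (E MinvAdj : Matrix ι ι ℂ → Matrix ι ι ℂ)
    (O : Matrix ι ι ℂ) : ℝ :=
  sSup {x : ℝ | ∃ σ : Matrix ι ι ℂ, IsDensityMatrix σ ∧
    x = ((Fintype.card κ : ℂ)⁻¹ * ∑ k : κ, ∑ b : ι,
      (E (U k * σ * (U k)ᴴ)) b b * ((U k * MinvAdj O * (U k)ᴴ) b b) ^ 2).re}

/-- The shadow seminorm `‖O‖_{shadow,𝒰,ℰ}`. -/
def shadowNorm {κ ι : Type*} [Fintype κ] [Fintype ι] [DecidableEq ι]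
    (U : κ → Matrix ι ι ℂ) (E MinvAdj : Matrix ι ι ℂ → Matrix ι ι ℂ)
    (O : Matrix ι ι ℂ) : ℝ :=
  Real.sqrt (shadowNormSq U E MinvAdj O)

/-- `Tr(ℰ∘diag) = Σ_b ⟨b|ℰ(|b⟩⟨b|)|b⟩`. -/
def diagTrace {ι : Type*} [Fintype ι] [DecidableEq ι]
    (E : Matrix ι ι ℂ → Matrix ι ι ℂ) : ℂ :=
  ∑ b : ι, (E (Matrix.single b b 1)) b b

/-- The depolarizing map `D_{d,f}(A) = f·A + (1−f)·tr(A)·I/d` (where `d` is the size of the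
index type). -/
def depol (ι : Type*) [Fintype ι] [DecidableEq ι] (f : ℂ)
    (A : Matrix ι ι ℂ) : Matrix ι ι ℂ :=
  f • A + ((1 - f) * (A.trace / (Fintype.card ι : ℂ))) • (1 : Matrix ι ι ℂ)

/-- `t`-fold Kronecker power of a matrix. -/
def kpow {ι : Type*} (t : ℕ) (U : Matrix ι ι ℂ) :
    Matrix (Fin t → ι) (Fin t → ι) ℂ :=
  Matrix.of fun x y => ∏ j, U (x j) (y j)

instance {ι : Type*} [Fintype ι] [DecidableEq ι] :
    MeasurableSpace (Matrix.unitaryGroup ι ℂ) := borel _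

/-- `𝒰` is a unitary `t`-design: the `t`-fold ensemble twirl coincides with the `t`-fold twirl
over the Haar probability measure on the unitary group. -/
def IsUnitaryDesign {κ ι : Type*} [Fintype κ] [Fintype ι] [DecidableEq ι]
    (U : κ → Matrix ι ι ℂ) (t : ℕ) : Prop :=
  ∃ μ : Measure (Matrix.unitaryGroup ι ℂ), μ.IsHaarMeasure ∧ IsProbabilityMeasure μ ∧
    ∀ A : Matrix (Fin t → ι) (Fin t → ι) ℂ, ∀ x y : Fin t → ι,
      (Fintype.card κ : ℂ)⁻¹ * ∑ k : κ, (kpow t (U k) * A * (kpow t (U k))ᴴ) x y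
        = ∫ V : Matrix.unitaryGroup ι ℂ,
            (kpow t (V : Matrix ι ι ℂ) * A * (kpow t (V : Matrix ι ι ℂ))ᴴ) x y ∂μ

/-- Kronecker product of an `n`-indexed family of `2×2` matrices. -/
def kprod {n : ℕ} (A : Fin n → Matrix (Fin 2) (Fin 2) ℂ) :
    Matrix (Fin n → Fin 2) (Fin n → Fin 2) ℂ :=
  Matrix.of fun x y => ∏ i, A i (x i) (y i)

/-- Spectral (operator) norm of a matrix. -/
def spNorm {ι : Type*} [Fintype ι] [DecidableEq ι] (A : Matrix ι ι ℂ) : ℝ :=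
  ‖Matrix.toEuclideanCLM (𝕜 := ℂ) A‖


section Aux

variable {ι : Type*} [Fintype ι] [DecidableEq ι]

lemma isPositiveMap_of_CP {Φ : Matrix ι ι ℂ → Matrix ι ι ℂ}
    (h : IsCompletelyPositive Φ) : IsPositiveMap Φ := by
  intro A hA
  have h1 := h 1 le_rfl (A.submatrix Prod.snd Prod.snd) (hA.submatrix _)
  have : tensorIdMap 1 Φ (A.submatrix Prod.snd Prod.snd)
      = (Φ A).submatrix (Prod.snd : Fin 1 × ι → ι) Prod.snd := by
    ext p q
    simp only [tensorIdMap, Matrix.of_apply, Matrix.submatrix_apply]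
    congr 1
  rw [this] at h1
  have h2 := h1.submatrix (fun i : ι => ((0 : Fin 1), i))
  simpa using h2

lemma herm_decomp {H : Matrix ι ι ℂ} (h : H.IsHermitian) :
    ∃ P Q : Matrix ι ι ℂ, P.PosSemidef ∧ Q.PosSemidef ∧ H = P - Q := by
  classical
  set V : Matrix ι ι ℂ := (h.eigenvectorUnitary : Matrix ι ι ℂ)
  refine ⟨V * diagonal (fun i => ((max (h.eigenvalues i) 0 : ℝ) : ℂ)) * Vᴴ,
          V * diagonal (fun i => ((max (-(h.eigenvalues i)) 0 : ℝ) : ℂ)) * Vᴴ, ?_, ?_, ?_⟩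
  · exact (Matrix.PosSemidef.diagonal (fun i => by
      simpa using Complex.zero_le_real.2 (le_max_right _ _))).mul_mul_conjTranspose_same V
  · exact (Matrix.PosSemidef.diagonal (fun i => by
      simpa using Complex.zero_le_real.2 (le_max_right _ _))).mul_mul_conjTranspose_same V
  · have hmax : ∀ i, max (h.eigenvalues i) 0 - max (-(h.eigenvalues i)) 0 = h.eigenvalues i := by
      intro i
      rcases le_total (h.eigenvalues i) 0 with hc | hc
      · simp [max_eq_right hc, max_eq_left (neg_nonneg.2 hc)]
      · simp [max_eq_left hc, max_eq_right (neg_nonpos.2 hc)]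
    have hfun : (RCLike.ofReal ∘ h.eigenvalues : ι → ℂ)
        = fun i => ((max (h.eigenvalues i) 0 : ℝ) : ℂ) - ((max (-(h.eigenvalues i)) 0 : ℝ) : ℂ) := by
      funext i
      rw [← Complex.ofReal_sub, hmax i]
      rfl
    have hd : diagonal (RCLike.ofReal ∘ h.eigenvalues : ι → ℂ)
        = diagonal (fun i => ((max (h.eigenvalues i) 0 : ℝ) : ℂ))
          - diagonal (fun i => ((max (-(h.eigenvalues i)) 0 : ℝ) : ℂ)) := by
      rw [hfun, Matrix.diagonal_sub]
    conv_lhs => rw [h.spectral_theorem, hd]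
    rw [map_sub, Unitary.conjStarAlgAut_apply, Unitary.conjStarAlgAut_apply]
    rfl

lemma isPositiveMap_isHermitian {Φ : Matrix ι ι ℂ →ₗ[ℂ] Matrix ι ι ℂ}
    (h : IsPositiveMap ⇑Φ) {H : Matrix ι ι ℂ} (hH : H.IsHermitian) :
    (Φ H).IsHermitian := by
  obtain ⟨P, Q, hP, hQ, rfl⟩ := herm_decomp hH
  rw [map_sub]
  exact ((h P hP).isHermitian).sub ((h Q hQ).isHermitian)

lemma isPositiveMap_conjTranspose {Φ : Matrix ι ι ℂ →ₗ[ℂ] Matrix ι ι ℂ}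
    (h : IsPositiveMap ⇑Φ) (A : Matrix ι ι ℂ) :
    Φ (Aᴴ) = (Φ A)ᴴ := by
  have key : ∀ H : Matrix ι ι ℂ, H.IsHermitian → (Φ H)ᴴ = Φ H :=
    fun H hH => isPositiveMap_isHermitian h hH
  have main : ∀ H1 H2 : Matrix ι ι ℂ, H1.IsHermitian → H2.IsHermitian →
      Φ ((H1 + Complex.I • H2)ᴴ) = (Φ (H1 + Complex.I • H2))ᴴ := by
    intro H1 H2 h1 h2
    have hct : (H1 + Complex.I • H2)ᴴ = H1 - Complex.I • H2 := by
      rw [conjTranspose_add, conjTranspose_smul, h1, h2]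
      simp [sub_eq_add_neg]
    rw [hct, map_sub, map_add]
    simp only [LinearMap.map_smul]
    rw [conjTranspose_add, conjTranspose_smul, key _ h1, key _ h2]
    simp [sub_eq_add_neg]
  have h1 : ((2:ℂ)⁻¹ • (A + Aᴴ)).IsHermitian := by
    unfold Matrix.IsHermitian
    rw [conjTranspose_smul, conjTranspose_add, conjTranspose_conjTranspose, add_comm Aᴴ A]
    congr 1
    simp
  have h2 : ((2 * Complex.I)⁻¹ • (A - Aᴴ)).IsHermitian := by
    unfold Matrix.IsHermitian
    rw [conjTranspose_smul, conjTranspose_sub, conjTranspose_conjTranspose]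
    rw [show star (2 * Complex.I)⁻¹ = -(2 * Complex.I)⁻¹ by
      simp [mul_inv, Complex.inv_I, mul_comm]]
    rw [neg_smul, ← smul_neg, neg_sub]
  have hA : A = (2:ℂ)⁻¹ • (A + Aᴴ) + Complex.I • ((2 * Complex.I)⁻¹ • (A - Aᴴ)) := by
    rw [smul_smul]
    rw [show Complex.I * (2 * Complex.I)⁻¹ = (2:ℂ)⁻¹ by
      field_simp]
    rw [← smul_add]
    have h3 : A + Aᴴ + (A - Aᴴ) = (2:ℂ) • A := by
      rw [two_smul]; abel
    rw [h3, smul_smul]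
    norm_num
  conv_lhs => rw [hA]
  conv_rhs => rw [hA]
  exact main _ _ h1 h2


end Aux

/-- under the stated faithfulness condition on the noise, the shadow seminorm is
point-separating on Hermitian matrices. -/
theorem stmt_18 {d : ℕ} (hd : 1 ≤ d) {κ : Type*} [Fintype κ] [Nonempty κ]
    (U : κ → Matrix (Fin d) (Fin d) ℂ) (hU : IsUnitaryEnsemble U)
    (E : Matrix (Fin d) (Fin d) ℂ →ₗ[ℂ] Matrix (Fin d) (Fin d) ℂ)
    (hE : IsQuantumChannel (⇑E))
    (Minv MinvAdj : Matrix (Fin d) (Fin d) ℂ → Matrix (Fin d) (Fin d) ℂ)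
    (hMinvL : Function.LeftInverse Minv (shadowChannel U (⇑E)))
    (hMinvR : Function.RightInverse Minv (shadowChannel U (⇑E)))
    (hAdj : IsHSAdjoint Minv MinvAdj)
    (hfaithful : ∀ b : Fin d, ∃ σ : Matrix (Fin d) (Fin d) ℂ,
      IsDensityMatrix σ ∧ (E σ) b b ≠ 0) :
    ∀ T : Matrix (Fin d) (Fin d) ℂ, T.IsHermitian →
      shadowNorm U (⇑E) MinvAdj T = 0 → T = 0 := by
  intro T hT hnorm
  classical
  have hpos : IsPositiveMap ⇑E := isPositiveMap_of_CP hE.1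
  have hTP : IsTracePreserving ⇑E := hE.2
  have hEct : ∀ A, E (Aᴴ) = (E A)ᴴ := isPositiveMap_conjTranspose hpos
  have hUU : ∀ k, (U k)ᴴ * U k = 1 := fun k => by
    simpa [Matrix.star_eq_conjTranspose] using (Matrix.mem_unitaryGroup_iff').mp (hU k)
  have hUU' : ∀ k, U k * (U k)ᴴ = 1 := fun k => by
    simpa [Matrix.star_eq_conjTranspose] using (Matrix.mem_unitaryGroup_iff).mp (hU k)
  -- std basis matrix facts
  have hstdct : ∀ b : Fin d, (Matrix.single b b (1:ℂ))ᴴ = Matrix.single b b 1 := by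
    intro b
    ext i j
    simp [Matrix.conjTranspose_apply, Matrix.single, and_comm]
  have htrstd : ∀ (X : Matrix (Fin d) (Fin d) ℂ) (a b : Fin d),
      (X * Matrix.single a b (1:ℂ)).trace = X b a := by
    intro X a b
    simp [Matrix.trace, Matrix.diag, Matrix.mul_apply, Matrix.single, ite_and]
  have htr0 : ∀ X : Matrix (Fin d) (Fin d) ℂ, (∀ B, (X * B).trace = 0) → X = 0 := by
    intro X hX
    ext i j
    have := hX (Matrix.single j i 1)
    rw [htrstd] at this
    simpa using this
  -- conjugate transpose commutes with the shadow channel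
  have hMct : ∀ A : Matrix (Fin d) (Fin d) ℂ,
      shadowChannel U (⇑E) (Aᴴ) = (shadowChannel U (⇑E) A)ᴴ := by
    intro A
    unfold shadowChannel
    rw [Matrix.conjTranspose_smul, Matrix.conjTranspose_sum]
    congr 1
    · simp
    refine Finset.sum_congr rfl fun k _ => ?_
    rw [Matrix.conjTranspose_sum]
    refine Finset.sum_congr rfl fun b _ => ?_
    rw [Matrix.conjTranspose_smul]
    congr 1
    · rw [show star ((E (U k * A * (U k)ᴴ)) b b) = (E (U k * A * (U k)ᴴ))ᴴ b b from rfl,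
        ← hEct, Matrix.conjTranspose_mul, Matrix.conjTranspose_mul,
        Matrix.conjTranspose_conjTranspose, Matrix.mul_assoc]
    · rw [Matrix.conjTranspose_mul, Matrix.conjTranspose_mul, hstdct,
        Matrix.conjTranspose_conjTranspose, Matrix.mul_assoc]
  have hMinvct : ∀ A : Matrix (Fin d) (Fin d) ℂ, Minv (Aᴴ) = (Minv A)ᴴ := by
    intro A
    conv_lhs => rw [← hMinvR A]
    rw [← hMct, hMinvL]
  set O : Matrix (Fin d) (Fin d) ℂ := MinvAdj T with hOdef
  -- O is Hermitian
  have hOadj : ∀ B, (Oᴴ * B).trace = (Tᴴ * Minv B).trace := fun B => (hAdj T B).symm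
  have hOherm : O.IsHermitian := by
    have key : ∀ B, (O * B).trace = (Oᴴ * B).trace := by
      intro B
      calc (O * B).trace
          = star (((O * B)ᴴ).trace) := by rw [Matrix.trace_conjTranspose, star_star]
        _ = star ((Bᴴ * Oᴴ).trace) := by rw [Matrix.conjTranspose_mul]
        _ = star ((Oᴴ * Bᴴ).trace) := by rw [Matrix.trace_mul_comm]
        _ = star ((Tᴴ * Minv (Bᴴ)).trace) := by rw [hOadj]
        _ = star ((Tᴴ * (Minv B)ᴴ).trace) := by rw [hMinvct]
        _ = star ((T * (Minv B)ᴴ).trace) := by rw [hT.eq]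
        _ = ((T * (Minv B)ᴴ)ᴴ).trace := by rw [Matrix.trace_conjTranspose]
        _ = ((Minv B)ᴴᴴ * Tᴴ).trace := by rw [Matrix.conjTranspose_mul]
        _ = (Minv B * Tᴴ).trace := by rw [Matrix.conjTranspose_conjTranspose]
        _ = (Tᴴ * Minv B).trace := Matrix.trace_mul_comm _ _
        _ = (Oᴴ * B).trace := (hOadj B).symm
    have hz : ∀ B, ((Oᴴ - O) * B).trace = 0 := by
      intro B
      rw [Matrix.sub_mul, Matrix.trace_sub, key B, sub_self]
    have := htr0 _ hz
    unfold Matrix.IsHermitian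
    rw [← sub_eq_zero]
    exact this
  -- The conjugated matrices are Hermitian, so their diagonal entries are real
  have hXherm : ∀ k, (U k * O * (U k)ᴴ).IsHermitian := by
    intro k
    unfold Matrix.IsHermitian
    rw [Matrix.conjTranspose_mul, Matrix.conjTranspose_mul,
      Matrix.conjTranspose_conjTranspose, hOherm.eq, Matrix.mul_assoc]
  have hXim : ∀ k b, ((U k * O * (U k)ᴴ) b b).im = 0 := by
    intro k b
    have := congrFun (congrFun (hXherm k).eq b) b
    rw [Matrix.conjTranspose_apply] at this
    have h2 := congrArg Complex.im this
    simp only [Complex.star_def, Complex.conj_im] at h2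
    linarith
  -- diagonal entries of PSD matrices
  have hdiag : ∀ {W : Matrix (Fin d) (Fin d) ℂ}, W.PosSemidef → ∀ b, 0 ≤ W b b := by
    intro W hW b
    have := hW.dotProduct_mulVec_nonneg (Pi.single b 1)
    simpa [dotProduct, Matrix.mulVec, Pi.single_apply] using this
  -- E applied to a conjugated density matrix: diagonal entries in [0,1]
  have hp : ∀ (σ : Matrix (Fin d) (Fin d) ℂ), IsDensityMatrix σ → ∀ k b,
      0 ≤ ((E (U k * σ * (U k)ᴴ)) b b).re ∧ ((E (U k * σ * (U k)ᴴ)) b b).re ≤ 1 ∧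
        ((E (U k * σ * (U k)ᴴ)) b b).im = 0 := by
    intro σ hσ k b
    have hWps : (U k * σ * (U k)ᴴ).PosSemidef := hσ.1.mul_mul_conjTranspose_same (U k)
    have hWtr : (U k * σ * (U k)ᴴ).trace = 1 := by
      rw [Matrix.trace_mul_cycle, hUU, Matrix.one_mul, hσ.2]
    have hEps : (E (U k * σ * (U k)ᴴ)).PosSemidef := hpos _ hWps
    have hEtr : (E (U k * σ * (U k)ᴴ)).trace = 1 := by rw [hTP, hWtr]
    have hnn : ∀ b', 0 ≤ ((E (U k * σ * (U k)ᴴ)) b' b').re ∧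
        ((E (U k * σ * (U k)ᴴ)) b' b').im = 0 := by
      intro b'
      have := hdiag hEps b'
      rw [Complex.le_def] at this
      exact ⟨this.1, this.2.symm⟩
    refine ⟨(hnn b).1, ?_, (hnn b).2⟩
    have hsum : ∑ b', ((E (U k * σ * (U k)ᴴ)) b' b').re = 1 := by
      have := congrArg Complex.re hEtr
      simpa [Matrix.trace, Matrix.diag, Complex.re_sum] using this
    calc ((E (U k * σ * (U k)ᴴ)) b b).re
        ≤ ∑ b', ((E (U k * σ * (U k)ᴴ)) b' b').re :=
          Finset.single_le_sum (fun b' _ => (hnn b').1) (Finset.mem_univ b)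
      _ = 1 := hsum
  -- real form of the value of the seminorm expression
  have hval : ∀ (σ : Matrix (Fin d) (Fin d) ℂ), IsDensityMatrix σ →
      ((Fintype.card κ : ℂ)⁻¹ * ∑ k : κ, ∑ b : Fin d,
        (E (U k * σ * (U k)ᴴ)) b b * ((U k * MinvAdj T * (U k)ᴴ) b b) ^ 2).re
      = (Fintype.card κ : ℝ)⁻¹ * ∑ k : κ, ∑ b : Fin d,
          ((E (U k * σ * (U k)ᴴ)) b b).re * (((U k * O * (U k)ᴴ) b b).re) ^ 2 := by
    intro σ hσ
    rw [show ((Fintype.card κ : ℂ)) = (((Fintype.card κ : ℝ)) : ℂ) from by norm_cast,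
      ← Complex.ofReal_inv, Complex.re_ofReal_mul]
    congr 1
    rw [Complex.re_sum]
    refine Finset.sum_congr rfl fun k _ => ?_
    rw [Complex.re_sum]
    refine Finset.sum_congr rfl fun b _ => ?_
    have him := (hp σ hσ k b).2.2
    have hqim := hXim k b
    rw [← hOdef]
    simp [Complex.mul_re, Complex.mul_im, pow_two, him, hqim]
  -- nonnegativity of each summand
  have hterm_nonneg : ∀ (σ : Matrix (Fin d) (Fin d) ℂ), IsDensityMatrix σ → ∀ k b,
      0 ≤ ((E (U k * σ * (U k)ᴴ)) b b).re * (((U k * O * (U k)ᴴ) b b).re) ^ 2 :=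
    fun σ hσ k b => mul_nonneg (hp σ hσ k b).1 (sq_nonneg _)
  -- the set is bounded above
  have hcardpos : (0:ℝ) < (Fintype.card κ : ℝ) := by
    exact_mod_cast Fintype.card_pos
  set S := {x : ℝ | ∃ σ : Matrix (Fin d) (Fin d) ℂ, IsDensityMatrix σ ∧
    x = ((Fintype.card κ : ℂ)⁻¹ * ∑ k : κ, ∑ b : Fin d,
      (E (U k * σ * (U k)ᴴ)) b b * ((U k * MinvAdj T * (U k)ᴴ) b b) ^ 2).re} with hSdef
  have hBdd : BddAbove S := by
    refine ⟨(Fintype.card κ : ℝ)⁻¹ * ∑ k : κ, ∑ b : Fin d,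
      (((U k * O * (U k)ᴴ) b b).re) ^ 2, ?_⟩
    rintro x ⟨σ, hσ, rfl⟩
    rw [hval σ hσ]
    refine mul_le_mul_of_nonneg_left ?_ (by positivity)
    refine Finset.sum_le_sum fun k _ => Finset.sum_le_sum fun b _ => ?_
    have h1 := (hp σ hσ k b).1
    have h2 := (hp σ hσ k b).2.1
    nlinarith [sq_nonneg (((U k * O * (U k)ᴴ) b b).re)]
  -- the supremum is nonpositive
  have hsup : sSup S ≤ 0 := by
    have : shadowNormSq U (⇑E) MinvAdj T ≤ 0 := Real.sqrt_eq_zero'.mp hnorm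
    exact this
  -- every diagonal entry of the conjugated O vanishes
  have hdzero : ∀ k b, (U k * O * (U k)ᴴ) b b = 0 := by
    intro k0 b0
    obtain ⟨σ', hσ', hne⟩ := hfaithful b0
    set σ : Matrix (Fin d) (Fin d) ℂ := (U k0)ᴴ * σ' * U k0 with hσdef
    have hσps : σ.PosSemidef := by
      have := hσ'.1.conjTranspose_mul_mul_same (U k0)
      simpa [hσdef, Matrix.mul_assoc] using this
    have hσtr : σ.trace = 1 := by
      rw [hσdef, Matrix.trace_mul_cycle, hUU', Matrix.one_mul, hσ'.2]
    have hσd : IsDensityMatrix σ := ⟨hσps, hσtr⟩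
    have hmem : (((Fintype.card κ : ℂ))⁻¹ * ∑ k : κ, ∑ b : Fin d,
        (E (U k * σ * (U k)ᴴ)) b b * ((U k * MinvAdj T * (U k)ᴴ) b b) ^ 2).re ∈ S :=
      ⟨σ, hσd, rfl⟩
    have hle := le_csSup hBdd hmem
    have hv := hval σ hσd
    have hsum0 : ∑ k : κ, ∑ b : Fin d,
        ((E (U k * σ * (U k)ᴴ)) b b).re * (((U k * O * (U k)ᴴ) b b).re) ^ 2 = 0 := by
      have hnonneg : 0 ≤ ∑ k : κ, ∑ b : Fin d,
          ((E (U k * σ * (U k)ᴴ)) b b).re * (((U k * O * (U k)ᴴ) b b).re) ^ 2 :=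
        Finset.sum_nonneg fun k _ => Finset.sum_nonneg fun b _ => hterm_nonneg σ hσd k b
      have hle0 : (Fintype.card κ : ℝ)⁻¹ * ∑ k : κ, ∑ b : Fin d,
          ((E (U k * σ * (U k)ᴴ)) b b).re * (((U k * O * (U k)ᴴ) b b).re) ^ 2 ≤ 0 := by
        rw [← hv]; exact le_trans hle hsup
      nlinarith [inv_pos.mpr hcardpos]
    have hterm0 : ((E (U k0 * σ * (U k0)ᴴ)) b0 b0).re *
        (((U k0 * O * (U k0)ᴴ) b0 b0).re) ^ 2 = 0 := by
      have hin := (Finset.sum_eq_zero_iff_of_nonneg fun k _ =>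
        Finset.sum_nonneg fun b _ => hterm_nonneg σ hσd k b).mp hsum0 k0 (Finset.mem_univ k0)
      exact (Finset.sum_eq_zero_iff_of_nonneg fun b _ =>
        hterm_nonneg σ hσd k0 b).mp hin b0 (Finset.mem_univ b0)
    have hsimp : U k0 * σ * (U k0)ᴴ = σ' := by
      rw [hσdef]
      rw [show U k0 * ((U k0)ᴴ * σ' * U k0) * (U k0)ᴴ
          = (U k0 * (U k0)ᴴ) * σ' * (U k0 * (U k0)ᴴ) by
        simp only [Matrix.mul_assoc], hUU']
      simp
    rw [hsimp] at hterm0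
    have hpre : ((E σ') b0 b0).re ≠ 0 := by
      intro h0
      apply hne
      have him : ((E σ') b0 b0).im = 0 := by
        have := (hp σ hσd k0 b0).2.2
        rw [hsimp] at this
        exact this
      exact Complex.ext h0 him
    have hre0 : ((U k0 * O * (U k0)ᴴ) b0 b0).re = 0 := by
      rcases mul_eq_zero.mp hterm0 with h | h
      · exact absurd h hpre
      · exact pow_eq_zero_iff two_ne_zero |>.mp h
    exact Complex.ext hre0 (hXim k0 b0)
  -- conclude T = 0
  have hTzero : Tᴴ = 0 := by
    apply htr0
    intro C
    have h1 : (Tᴴ * C).trace = (Oᴴ * shadowChannel U (⇑E) C).trace := by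
      conv_lhs => rw [← hMinvL C]
      exact hAdj T (shadowChannel U (⇑E) C)
    rw [h1, hOherm.eq]
    unfold shadowChannel
    rw [Matrix.mul_smul, Matrix.trace_smul, Matrix.mul_sum, Matrix.trace_sum]
    have : ∀ k ∈ Finset.univ, (O * ∑ b : Fin d,
        (E (U k * C * (U k)ᴴ)) b b • ((U k)ᴴ * Matrix.single b b 1 * U k)).trace = 0 := by
      intro k _
      rw [Matrix.mul_sum, Matrix.trace_sum]
      refine Finset.sum_eq_zero fun b _ => ?_
      rw [Matrix.mul_smul, Matrix.trace_smul]
      have htr : (O * ((U k)ᴴ * Matrix.single b b 1 * U k)).trace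
          = (U k * O * (U k)ᴴ) b b := by
        rw [show O * ((U k)ᴴ * Matrix.single b b 1 * U k)
            = (O * (U k)ᴴ) * Matrix.single b b 1 * U k by
          simp only [Matrix.mul_assoc]]
        rw [Matrix.trace_mul_cycle, ← Matrix.mul_assoc, htrstd]
      rw [htr, hdzero k b, smul_zero]
    rw [Finset.sum_eq_zero this, smul_zero]
  calc T = Tᴴ := hT.symm
    _ = 0 := hTzero

end NoisyShadows
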